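/- Let n, n' ∈ N and a ∈ A. Define sequences a_0 := a, b_0 := a, and recursively a_{m+1} := n ▷ b_m and b_{m+1} := n' ▷ a_m for m ∈ ℕ₀. Then θ(n,n';a) := |{(nn')^m ▷ a : m ∈ ℕ₀} ∪ {(n'n)^m ▷ a : m ∈ ℕ₀}| satisfies: θ(n,n';a) = min{ m ∈ ℕ : a_m = b_m } if there exists m ∈ ℕ with a_m = b_m, and θ(n,n';a) is infinite if a_m ≠ b_m for all m ∈ ℕ. -/

import Mathlib

variable {N : Type*} {A : Type*}

/-- The element `(i j)^m ▷ a` for the action of `F₂(N)` on `A`. -/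
def altIter (act : N → A → A) (i j : N) (a : A) : ℕ → A
  | 0 => a
  | m + 1 => act i (act j (altIter act i j a m))

/-- The set `Θ(n,n';a) = {(n n')^m ▷ a, (n' n)^m ▷ a | m ∈ ℕ₀}`. -/
def ThetaSet (act : N → A → A) (i j : N) (a : A) : Set A :=
  {x | ∃ m : ℕ, x = altIter act i j a m ∨ x = altIter act j i a m}

open Function MulAction Subgroup in
/-- with `a₀ = b₀ = a`, `a_{m+1} = n ▷ b_m`, `b_{m+1} = n' ▷ a_m`, the
cardinality `θ(n,n';a) = |Θ(n,n';a)|` equals `min {m ∈ ℕ | a_m = b_m}` if such an `m`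
exists, and `Θ(n,n';a)` is infinite otherwise. -/
theorem stmt19 (act : N → A → A) (hact : ∀ n a, act n (act n a) = a)
    (n n' : N) (a : A) (f g : ℕ → A) (hf0 : f 0 = a) (hg0 : g 0 = a)
    (hf : ∀ m, f (m + 1) = act n (g m)) (hg : ∀ m, g (m + 1) = act n' (f m)) :
    ((∃ m : ℕ, 0 < m ∧ f m = g m) →
      (ThetaSet act n n' a).Finite ∧
        (ThetaSet act n n' a).ncard = sInf {m : ℕ | 0 < m ∧ f m = g m}) ∧
    ((∀ m : ℕ, 0 < m → f m ≠ g m) → (ThetaSet act n n' a).Infinite) := by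
  classical
  set e : Equiv.Perm A :=
    ⟨fun x => act n (act n' x), fun x => act n' (act n x),
      fun x => by simp [hact], fun x => by simp [hact]⟩ with he
  have hee : ∀ x, e x = act n (act n' x) := fun x => rfl
  have hei : ∀ x, e⁻¹ x = act n' (act n x) := fun x => rfl
  have hinj : ∀ i : N, Function.Injective (act i) := by
    intro i x y h
    have := congrArg (act i) h
    rwa [hact, hact] at this
  -- altIter in terms of powers of e
  have L1 : ∀ k, altIter act n n' a k = (e ^ k) a := by
    intro k
    induction k with
    | zero => rfl
    | succ k ih =>
      rw [show altIter act n n' a (k + 1) = act n (act n' (altIter act n n' a k)) from rfl,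
        ih, pow_succ', Equiv.Perm.mul_apply, hee]
  have L2 : ∀ k, altIter act n' n a k = ((e⁻¹) ^ k) a := by
    intro k
    induction k with
    | zero => rfl
    | succ k ih =>
      rw [show altIter act n' n a (k + 1) = act n' (act n (altIter act n' n a k)) from rfl,
        ih, pow_succ', Equiv.Perm.mul_apply, hei]
  -- ThetaSet is the orbit under the cyclic group generated by e
  have L3 : ThetaSet act n n' a = orbit (zpowers e) a := by
    ext x
    constructor
    · rintro ⟨m, (rfl | rfl)⟩
      · rw [L1]
        exact mem_orbit_iff.2 ⟨(⟨e, mem_zpowers e⟩ : zpowers e) ^ m, rfl⟩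
      · rw [L2]
        exact mem_orbit_iff.2 ⟨(⟨e, mem_zpowers e⟩ : zpowers e)⁻¹ ^ m, rfl⟩
    · rintro ⟨⟨u, hu⟩, rfl⟩
      rw [mem_zpowers_iff] at hu
      obtain ⟨k, rfl⟩ := hu
      rcases k.eq_nat_or_neg with ⟨m, rfl | rfl⟩
      · refine ⟨m, Or.inl ?_⟩
        rw [L1]
        simp [Submonoid.smul_def, Equiv.Perm.smul_def, zpow_natCast]
      · refine ⟨m, Or.inr ?_⟩
        rw [L2]
        simp [Submonoid.smul_def, Equiv.Perm.smul_def, zpow_neg, zpow_natCast, inv_pow]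
  -- the sequences f, g in terms of powers of e
  have L4a : ∀ k, f (2 * k) = (e ^ k) a ∧ g (2 * k) = ((e⁻¹) ^ k) a := by
    intro k
    induction k with
    | zero => simpa using ⟨hf0, hg0⟩
    | succ k ih =>
      have h2 : 2 * (k + 1) = (2 * k + 1) + 1 := by ring
      constructor
      · rw [h2, hf, hg, ih.1, pow_succ', Equiv.Perm.mul_apply, hee]
      · rw [h2, hg, hf, ih.2, pow_succ', Equiv.Perm.mul_apply, hei]
  -- the key equivalence: f m = g m ↔ e^m a = a
  have L4 : ∀ m : ℕ, (f m = g m ↔ (e ^ m) a = a) := by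
    intro m
    rcases Nat.even_or_odd m with ⟨k, hk⟩ | ⟨k, hk⟩
    · rw [hk, show k + k = 2 * k by ring, (L4a k).1, (L4a k).2, inv_pow]
      constructor
      · intro h
        have h2 : (e ^ k) ((e ^ k) a) = a := by
          conv_lhs => rw [h]
          exact (e ^ k).apply_symm_apply a
        rw [show (2 : ℕ) * k = k + k by ring, pow_add, Equiv.Perm.mul_apply]
        exact h2
      · intro h
        rw [show (2 : ℕ) * k = k + k by ring, pow_add, Equiv.Perm.mul_apply] at h
        apply (e ^ k).injective
        rw [← Equiv.Perm.mul_apply (e ^ k) (e ^ k)⁻¹, mul_inv_cancel, Equiv.Perm.one_apply, h]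
    · rw [hk, hf, hg, (L4a k).1, (L4a k).2]
      have step1 : act n (((e⁻¹) ^ k) a) = act n' ((e ^ k) a) ↔
          ((e⁻¹) ^ k) a = e ((e ^ k) a) := by
        constructor
        · intro h
          have := congrArg (act n) h
          rw [hact] at this
          rw [hee]
          exact this
        · intro h
          rw [h, hee, hact]
      rw [step1, inv_pow]
      have step2 : (e ^ k)⁻¹ a = e ((e ^ k) a) ↔ (e ^ (2 * k + 1)) a = a := by
        constructor
        · intro h
          have := congrArg (e ^ k) h
          rw [← Equiv.Perm.mul_apply (e ^ k) (e ^ k)⁻¹, mul_inv_cancel, Equiv.Perm.one_apply] at this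
          rw [show (2 : ℕ) * k + 1 = k + (k + 1) by ring, pow_add, Equiv.Perm.mul_apply,
            pow_succ', Equiv.Perm.mul_apply, ← this]
        · intro h
          rw [show (2 : ℕ) * k + 1 = k + (k + 1) by ring, pow_add, Equiv.Perm.mul_apply,
            pow_succ', Equiv.Perm.mul_apply] at h
          apply (e ^ k).injective
          rw [← Equiv.Perm.mul_apply (e ^ k) (e ^ k)⁻¹, mul_inv_cancel, Equiv.Perm.one_apply]
          exact h.symm
      exact step2
  have hiter : ∀ m : ℕ, (e • · : A → A)^[m] a = (e ^ m) a := by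
    intro m; rw [smul_iterate]; rfl
  constructor
  · rintro ⟨m, hm⟩
    have hmem : a ∈ periodicPts (e • · : A → A) :=
      ⟨m, hm.1, show (e • · : A → A)^[m] a = a by rw [hiter]; exact (L4 m).1 hm.2⟩
    have hpos : 0 < minimalPeriod (e • · : A → A) a :=
      minimalPeriod_pos_of_mem_periodicPts hmem
    have hsinf : sInf {m : ℕ | 0 < m ∧ f m = g m} = minimalPeriod (e • · : A → A) a := by
      apply le_antisymm
      · apply Nat.sInf_le
        refine ⟨hpos, (L4 _).2 ?_⟩
        rw [← hiter]
        exact isPeriodicPt_minimalPeriod _ _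
      · obtain ⟨h1, h2⟩ := Nat.sInf_mem (⟨m, hm⟩ : {m : ℕ | 0 < m ∧ f m = g m}.Nonempty)
        exact IsPeriodicPt.minimalPeriod_le h1
          (show (e • · : A → A)^[_] a = a by rw [hiter]; exact (L4 _).1 h2)
    haveI : NeZero (minimalPeriod (e • · : A → A) a) := ⟨hpos.ne'⟩
    have hequiv := orbitZPowersEquiv e a
    haveI : Finite (orbit (zpowers e) a) := Finite.of_equiv _ hequiv.symm
    rw [L3]
    refine ⟨Set.toFinite _, ?_⟩
    rw [hsinf, ← Nat.card_coe_set_eq, Nat.card_congr hequiv, Nat.card_zmod]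
  · intro hne
    have key : ∀ m : ℕ, 0 < m → (e ^ m) a ≠ a := fun m hm h => hne m hm ((L4 m).2 h)
    have hlt : ∀ i j : ℕ, i < j → (e ^ i) a ≠ (e ^ j) a := by
      intro i j hij h
      apply key (j - i) (by omega)
      apply (e ^ i).injective
      rw [← Equiv.Perm.mul_apply, ← pow_add, Nat.add_sub_cancel' hij.le, ← h]
    apply Set.infinite_of_injective_forall_mem (f := fun m : ℕ => (e ^ m) a)
    · intro i j h
      rcases lt_trichotomy i j with hij | hij | hij
      · exact absurd h (hlt i j hij)
      · exact hij
      · exact absurd h.symm (hlt j i hij)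
    · intro m
      exact ⟨m, Or.inl (L1 m).symm⟩
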